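/- For all sufficiently large n one has nF̄(b)<1 for every b>n^{β+ε} (so that θ_{n,b}>0 is well defined), and sup{ n·θ_{n,b}^κ : b>n^{β+ε} } → 0 as n→∞. -/

import Mathlib

open MeasureTheory ProbabilityTheory Filter

noncomputable section

/-- Right tail `F̄(x) = F((x,∞))` of a measure on `ℝ`, as a real number. -/
def rtail (F : Measure ℝ) (x : ℝ) : ℝ := (F (Set.Ioi x)).toReal

/-- `L` is slowly varying at infinity. -/
def SlowlyVarying (L : ℝ → ℝ) : Prop :=
  ∀ t > 0, Tendsto (fun x => L (t * x) / L x) atTop (nhds 1)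

lemma rtail_le_one (F : Measure ℝ) [IsProbabilityMeasure F] (y : ℝ) : rtail F y ≤ 1 := by
  have h : F (Set.Ioi y) ≤ 1 := prob_le_one
  have := ENNReal.toReal_mono ENNReal.one_ne_top h
  simpa [rtail] using this

lemma rtail_anti (F : Measure ℝ) [IsProbabilityMeasure F] {x y : ℝ} (h : x ≤ y) :
    rtail F y ≤ rtail F x := by
  have h1 : F (Set.Ioi y) ≤ F (Set.Ioi x) := measure_mono (Set.Ioi_subset_Ioi h)
  exact ENNReal.toReal_mono (measure_ne_top F _) h1

lemma potter (F : Measure ℝ) [IsProbabilityMeasure F]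
    (α : ℝ) (hα0 : 0 < α)
    (L : ℝ → ℝ) (hLpos : ∀ x > 0, 0 < L x) (hL : SlowlyVarying L)
    (htail : ∀ x > 0, rtail F x = L x * x ^ (-α))
    (δ : ℝ) (hδ : 0 < δ) :
    ∃ C ≥ (1:ℝ), ∃ X ≥ (1:ℝ), ∀ x ≥ X, C⁻¹ * x ^ (-δ) ≤ L x ∧ L x ≤ C * x ^ δ := by
  have hLval : ∀ y > (0:ℝ), L y = rtail F y * y ^ α := by
    intro y hy
    rw [htail y hy, Real.rpow_neg hy.le, mul_assoc,
      inv_mul_cancel₀ (Real.rpow_pos_of_pos hy α).ne', mul_one]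
  have hrt_pos : ∀ y > (0:ℝ), 0 < rtail F y := by
    intro y hy
    rw [htail y hy]
    exact mul_pos (hLpos y hy) (Real.rpow_pos_of_pos hy _)
  -- ratio bounds
  have hlt : (2:ℝ) ^ (-δ) < 1 := Real.rpow_lt_one_of_one_lt_of_neg one_lt_two (by linarith)
  have hgt : 1 < (2:ℝ) ^ δ := by
    rw [Real.one_lt_rpow_iff_of_pos (by norm_num)]
    exact Or.inl ⟨one_lt_two, hδ⟩
  have hev : ∀ᶠ x in atTop, L (2 * x) / L x ∈ Set.Ioo ((2:ℝ) ^ (-δ)) ((2:ℝ) ^ δ) :=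
    (hL 2 (by norm_num)).eventually (Ioo_mem_nhds hlt hgt)
  obtain ⟨X0, hX0⟩ := eventually_atTop.1 hev
  set X : ℝ := max X0 1 with hXdef
  have hX1 : (1:ℝ) ≤ X := le_max_right _ _
  have hX0le : ∀ x ≥ X, L (2 * x) / L x ∈ Set.Ioo ((2:ℝ) ^ (-δ)) ((2:ℝ) ^ δ) := by
    intro x hx
    exact hX0 x (le_trans (le_max_left _ _) hx)
  have hXpos : (0:ℝ) < X := lt_of_lt_of_le one_pos hX1
  have hLposX : ∀ x ≥ X, 0 < L x := fun x hx => hLpos x (lt_of_lt_of_le hXpos hx)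
  have hup : ∀ x ≥ X, L (2 * x) ≤ (2:ℝ) ^ δ * L x := by
    intro x hx
    have h := (hX0le x hx).2
    rw [div_lt_iff₀ (hLposX x hx)] at h
    linarith
  have hlo : ∀ x ≥ X, (2:ℝ) ^ (-δ) * L x ≤ L (2 * x) := by
    intro x hx
    have h := (hX0le x hx).1
    rw [lt_div_iff₀ (hLposX x hx)] at h
    linarith
  -- bounds on [X, 2X]
  set M : ℝ := (2 * X) ^ α with hMdef
  have hMpos : 0 < M := Real.rpow_pos_of_pos (by linarith) α
  have hMb : ∀ y, X ≤ y → y ≤ 2 * X → L y ≤ M := by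
    intro y hy1 hy2
    have hy0 : 0 < y := lt_of_lt_of_le hXpos hy1
    rw [hLval y hy0]
    calc rtail F y * y ^ α ≤ 1 * (2 * X) ^ α := by
          apply mul_le_mul (rtail_le_one F y) (Real.rpow_le_rpow hy0.le hy2 hα0.le)
            (Real.rpow_nonneg hy0.le α) zero_le_one
      _ = M := by rw [one_mul]
  set m0 : ℝ := rtail F (2 * X) * X ^ α with hm0def
  have hm0pos : 0 < m0 := mul_pos (hrt_pos _ (by linarith)) (Real.rpow_pos_of_pos hXpos α)
  have hm0b : ∀ y, X ≤ y → y ≤ 2 * X → m0 ≤ L y := by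
    intro y hy1 hy2
    have hy0 : 0 < y := lt_of_lt_of_le hXpos hy1
    rw [hLval y hy0]
    apply mul_le_mul (rtail_anti F hy2) (Real.rpow_le_rpow hXpos.le hy1 hα0.le)
      (Real.rpow_nonneg hXpos.le α) (hrt_pos y hy0).le
  -- inductive upper bound
  have hub : ∀ k : ℕ, ∀ x, X ≤ x → x ≤ 2 ^ (k + 1) * X → L x ≤ M * (x / X) ^ δ := by
    intro k
    induction k with
    | zero =>
      intro x hx1 hx2
      have h1 : (1:ℝ) ≤ (x / X) ^ δ :=
        Real.one_le_rpow ((one_le_div hXpos).2 hx1) hδ.le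
      calc L x ≤ M := hMb x hx1 (by rw [pow_one] at hx2; linarith)
        _ = M * 1 := (mul_one M).symm
        _ ≤ M * (x / X) ^ δ := by nlinarith
    | succ k ih =>
      intro x hx1 hx2
      rcases le_or_gt x (2 ^ (k + 1) * X) with h | h
      · exact ih x hx1 h
      · have h2k : (2:ℝ) ≤ 2 ^ (k + 1) := by
          calc (2:ℝ) = 2 ^ 1 := (pow_one 2).symm
            _ ≤ 2 ^ (k + 1) := pow_le_pow_right₀ one_le_two (Nat.le_add_left 1 k)
        have hx2' : X ≤ x / 2 := by
          rw [le_div_iff₀ (by norm_num : (0:ℝ) < 2)]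
          nlinarith
        have hx2'' : x / 2 ≤ 2 ^ (k + 1) * X := by
          rw [div_le_iff₀ (by norm_num : (0:ℝ) < 2)]
          calc x ≤ 2 ^ (k + 1 + 1) * X := hx2
            _ = 2 ^ (k + 1) * X * 2 := by ring
        have hx0 : 0 < x := by nlinarith
        have key : L x ≤ (2:ℝ) ^ δ * L (x / 2) := by
          have := hup (x / 2) hx2'
          rwa [mul_div_cancel₀ x (by norm_num : (2:ℝ) ≠ 0)] at this
        have hrw : (x / X) ^ δ = (2:ℝ) ^ δ * (x / 2 / X) ^ δ := by
          rw [← Real.mul_rpow (by norm_num) (by positivity)]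
          congr 1
          field_simp
        calc L x ≤ (2:ℝ) ^ δ * L (x / 2) := key
          _ ≤ (2:ℝ) ^ δ * (M * (x / 2 / X) ^ δ) := by
              have := ih (x / 2) hx2' hx2''
              nlinarith [Real.rpow_pos_of_pos (two_pos (α := ℝ)) δ]
          _ = M * (x / X) ^ δ := by rw [hrw]; ring
  -- inductive lower bound
  have hlb : ∀ k : ℕ, ∀ x, X ≤ x → x ≤ 2 ^ (k + 1) * X → m0 * (x / X) ^ (-δ) ≤ L x := by
    intro k
    induction k with
    | zero =>
      intro x hx1 hx2
      have h1 : (x / X) ^ (-δ) ≤ 1 := by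
        apply Real.rpow_le_one_of_one_le_of_nonpos ((one_le_div hXpos).2 hx1) (by linarith)
      calc m0 * (x / X) ^ (-δ) ≤ m0 * 1 := by nlinarith
        _ = m0 := mul_one m0
        _ ≤ L x := hm0b x hx1 (by rw [pow_one] at hx2; linarith)
    | succ k ih =>
      intro x hx1 hx2
      rcases le_or_gt x (2 ^ (k + 1) * X) with h | h
      · exact ih x hx1 h
      · have h2k : (2:ℝ) ≤ 2 ^ (k + 1) := by
          calc (2:ℝ) = 2 ^ 1 := (pow_one 2).symm
            _ ≤ 2 ^ (k + 1) := pow_le_pow_right₀ one_le_two (Nat.le_add_left 1 k)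
        have hx2' : X ≤ x / 2 := by
          rw [le_div_iff₀ (by norm_num : (0:ℝ) < 2)]
          nlinarith
        have hx2'' : x / 2 ≤ 2 ^ (k + 1) * X := by
          rw [div_le_iff₀ (by norm_num : (0:ℝ) < 2)]
          calc x ≤ 2 ^ (k + 1 + 1) * X := hx2
            _ = 2 ^ (k + 1) * X * 2 := by ring
        have hx0 : 0 < x := by nlinarith
        have key : (2:ℝ) ^ (-δ) * L (x / 2) ≤ L x := by
          have := hlo (x / 2) hx2'
          rwa [mul_div_cancel₀ x (by norm_num : (2:ℝ) ≠ 0)] at this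
        have hrw : (x / X) ^ (-δ) = (2:ℝ) ^ (-δ) * (x / 2 / X) ^ (-δ) := by
          rw [← Real.mul_rpow (by norm_num) (by positivity)]
          congr 1
          field_simp
        calc m0 * (x / X) ^ (-δ) = (2:ℝ) ^ (-δ) * (m0 * (x / 2 / X) ^ (-δ)) := by
              rw [hrw]; ring
          _ ≤ (2:ℝ) ^ (-δ) * L (x / 2) := by
              have := ih (x / 2) hx2' hx2''
              nlinarith [Real.rpow_pos_of_pos (two_pos (α := ℝ)) (-δ)]
          _ ≤ L x := key
  -- conclude
  refine ⟨max (max M m0⁻¹) 1, le_max_right _ _, X, hX1, ?_⟩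
  intro x hx
  have hx0 : 0 < x := lt_of_lt_of_le hXpos hx
  obtain ⟨k, hk⟩ := pow_unbounded_of_one_lt (x / X) (one_lt_two (α := ℝ))
  have hxk : x ≤ 2 ^ (k + 1) * X := by
    rw [div_lt_iff₀ hXpos] at hk
    have h2 : (2:ℝ) ^ k ≤ 2 ^ (k + 1) := pow_le_pow_right₀ one_le_two (Nat.le_succ k)
    nlinarith
  set C : ℝ := max (max M m0⁻¹) 1 with hCdef
  have hCM : M ≤ C := le_trans (le_max_left _ _) (le_max_left _ _)
  have hCm : m0⁻¹ ≤ C := le_trans (le_max_right _ _) (le_max_left _ _)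
  have hC1 : (1:ℝ) ≤ C := le_max_right _ _
  have hCpos : 0 < C := lt_of_lt_of_le one_pos hC1
  constructor
  · have h1 := hlb k x hx hxk
    have h2 : x ^ (-δ) ≤ (x / X) ^ (-δ) :=
      Real.rpow_le_rpow_of_nonpos (by positivity) (div_le_self hx0.le hX1) (by linarith)
    have h3 : C⁻¹ ≤ m0 := by
      have := inv_anti₀ (inv_pos.2 hm0pos) hCm
      rwa [inv_inv] at this
    calc C⁻¹ * x ^ (-δ) ≤ m0 * (x / X) ^ (-δ) := by
          apply mul_le_mul h3 h2 (Real.rpow_nonneg hx0.le _) hm0pos.le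
      _ ≤ L x := h1
  · have h1 := hub k x hx hxk
    have h2 : (x / X) ^ δ ≤ x ^ δ :=
      Real.rpow_le_rpow (by positivity) (div_le_self hx0.le hX1) hδ.le
    calc L x ≤ M * (x / X) ^ δ := h1
      _ ≤ C * x ^ δ := by
          apply mul_le_mul hCM h2 (Real.rpow_nonneg (by positivity) _) hCpos.le

/-- The twisting parameter `θ_{n,b} = -log(n F̄(b)) / b`. -/
def theta (F : Measure ℝ) (n : ℕ) (b : ℝ) : ℝ := -Real.log ((n : ℝ) * rtail F b) / b

set_option maxHeartbeats 1000000 in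
/-- For all large `n`, `n F̄(b) < 1` for every `b > n^{β+ε}` (so `θ_{n,b} > 0` is well
defined), and `sup { n θ_{n,b}^κ : b > n^{β+ε} } → 0` as `n → ∞`. -/
theorem stmt1
    (F : Measure ℝ) [IsProbabilityMeasure F]
    (α : ℝ) (hα : 1 < α)
    (L : ℝ → ℝ) (hLpos : ∀ x > 0, 0 < L x) (hL : SlowlyVarying L)
    (htail : ∀ x > 0, rtail F x = L x * x ^ (-α))
    (hmeanInt : Integrable (fun x => x) F) (hmean : ∫ x, x ∂F = 0)
    (β : ℝ) (hβ : β = 1 / min α 2)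
    (ε : ℝ) (hε : 0 < ε)
    (κ : ℝ) (hκ : κ = if 2 < α then 2 else (1 + ε) / (1 / α + ε)) :
    (∃ N : ℕ, ∀ n ≥ N, ∀ b > (n : ℝ) ^ (β + ε), (n : ℝ) * rtail F b < 1) ∧
    (∀ δ > 0, ∃ N : ℕ, ∀ n ≥ N, ∀ b > (n : ℝ) ^ (β + ε),
      (n : ℝ) * theta F n b ^ κ < δ) := by
  have hα0 : 0 < α := lt_trans one_pos hα
  have hmin1 : 1 < min α 2 := lt_min hα one_lt_two
  have hmin0 : 0 < min α 2 := lt_trans one_pos hmin1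
  have hβpos : 0 < β := by rw [hβ]; positivity
  have hβε : 0 < β + ε := by linarith
  have hαβ : 1 ≤ α * β := by
    rw [hβ, mul_one_div, le_div_iff₀ hmin0, one_mul]
    exact min_le_left α 2
  have hκpos : 0 < κ := by
    rw [hκ]; split
    · norm_num
    · have h1 : 0 < 1 / α + ε := by positivity
      positivity
  have hκβε : 1 + ε ≤ κ * (β + ε) := by
    rw [hκ, hβ]
    by_cases h : 2 < α
    · rw [if_pos h, min_eq_right h.le]
      norm_num
      linarith
    · rw [if_neg h, min_eq_left (not_lt.1 h)]
      have h1 : 0 < 1 / α + ε := by positivity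
      rw [div_mul_cancel₀ _ h1.ne']
  set δ0 : ℝ := α * ε / (2 * (β + ε)) with hδ0def
  have hδ0pos : 0 < δ0 := by positivity
  have hδ0βε : δ0 * (β + ε) = α * ε / 2 := by
    have hne' : (β + ε) ≠ 0 := hβε.ne'
    rw [hδ0def]
    field_simp
  have hδ0α : δ0 < α := by
    rw [hδ0def, div_lt_iff₀ (by positivity)]
    have h1 : ε < 2 * (β + ε) := by linarith only [hβpos, hε]
    exact mul_lt_mul_of_pos_left h1 hα0
  have hs : 1 + α * ε / 2 ≤ (α - δ0) * (β + ε) := by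
    have h1 : (α - δ0) * (β + ε) = α * (β + ε) - δ0 * (β + ε) := by ring
    have h3 : α * (β + ε) = α * β + α * ε := by ring
    rw [h1, hδ0βε]
    linarith only [hαβ, h3]
  obtain ⟨C, hC1, X, hX1, hCX⟩ := potter F α hα0 L hLpos hL htail δ0 hδ0pos
  have hCpos : 0 < C := lt_of_lt_of_le one_pos hC1
  have hrt_pos : ∀ y > (0:ℝ), 0 < rtail F y := by
    intro y hy
    rw [htail y hy]
    exact mul_pos (hLpos y hy) (Real.rpow_pos_of_pos hy _)
  have htendnb : Tendsto (fun n : ℕ => (n : ℝ) ^ (β + ε)) atTop atTop :=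
    (tendsto_rpow_atTop hβε).comp tendsto_natCast_atTop_atTop
  -- Part 1, as an eventual statement
  have hpart1 : ∀ᶠ n : ℕ in atTop, ∀ b > (n : ℝ) ^ (β + ε), (n : ℝ) * rtail F b < 1 := by
    have hexp : 0 < (α - δ0) * (β + ε) - 1 := by
      linarith only [hs, mul_pos hα0 hε]
    have hb : Tendsto (fun n : ℕ => C * (n : ℝ) ^ (1 - (α - δ0) * (β + ε)))
        atTop (nhds 0) := by
      have h0 : Tendsto (fun n : ℕ => (n : ℝ) ^ (-((α - δ0) * (β + ε) - 1)))
          atTop (nhds 0) :=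
        (tendsto_rpow_neg_atTop hexp).comp tendsto_natCast_atTop_atTop
      have h1 : Tendsto (fun n : ℕ => C * (n : ℝ) ^ (-((α - δ0) * (β + ε) - 1)))
          atTop (nhds (C * 0)) := h0.const_mul C
      rw [mul_zero] at h1
      convert h1 using 3
      ring
    filter_upwards [htendnb.eventually_ge_atTop X, hb.eventually_lt_const one_pos,
      eventually_ge_atTop 1] with n hna hnb hn1
    intro b hbgt
    have hn0 : (0:ℝ) < (n : ℝ) := by exact_mod_cast hn1
    have htpos : (0:ℝ) < (n : ℝ) ^ (β + ε) := Real.rpow_pos_of_pos hn0 _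
    have hXb : X ≤ b := le_of_lt (lt_of_le_of_lt hna hbgt)
    have hb0 : 0 < b := lt_of_lt_of_le (lt_of_lt_of_le one_pos hX1) hXb
    have h1 : rtail F b ≤ C * b ^ (δ0 - α) := by
      rw [htail b hb0]
      calc L b * b ^ (-α) ≤ (C * b ^ δ0) * b ^ (-α) :=
            mul_le_mul_of_nonneg_right (hCX b hXb).2 (Real.rpow_nonneg hb0.le _)
        _ = C * b ^ (δ0 - α) := by
            rw [mul_assoc, ← Real.rpow_add hb0, sub_eq_add_neg]
    have h2 : b ^ (δ0 - α) ≤ ((n : ℝ) ^ (β + ε)) ^ (δ0 - α) :=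
      Real.rpow_le_rpow_of_nonpos htpos hbgt.le (by linarith only [hδ0α])
    have h3 : ((n : ℝ) ^ (β + ε)) ^ (δ0 - α) = (n : ℝ) ^ ((β + ε) * (δ0 - α)) :=
      (Real.rpow_mul hn0.le _ _).symm
    have h4 : (n : ℝ) * rtail F b ≤ C * (n : ℝ) ^ (1 - (α - δ0) * (β + ε)) := by
      have h5 : rtail F b ≤ C * (n : ℝ) ^ ((β + ε) * (δ0 - α)) := by
        calc rtail F b ≤ C * b ^ (δ0 - α) := h1
          _ ≤ C * ((n : ℝ) ^ (β + ε)) ^ (δ0 - α) :=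
              mul_le_mul_of_nonneg_left h2 hCpos.le
          _ = C * (n : ℝ) ^ ((β + ε) * (δ0 - α)) := by rw [h3]
      calc (n : ℝ) * rtail F b ≤ (n : ℝ) * (C * (n : ℝ) ^ ((β + ε) * (δ0 - α))) :=
            mul_le_mul_of_nonneg_left h5 hn0.le
        _ = C * ((n : ℝ) ^ (1:ℝ) * (n : ℝ) ^ ((β + ε) * (δ0 - α))) := by
            rw [Real.rpow_one]; ring
        _ = C * (n : ℝ) ^ (1 - (α - δ0) * (β + ε)) := by
            rw [← Real.rpow_add hn0]
            congr 1
            ring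
    exact lt_of_le_of_lt h4 hnb
  obtain ⟨N1, hN1⟩ := eventually_atTop.1 hpart1
  refine ⟨⟨N1, hN1⟩, ?_⟩
  -- Part 2
  intro δ hδpos
  set A : ℝ := α + δ0 + 1 with hAdef
  have hApos : 0 < A := by positivity
  have hABpos : 0 < A * (β + ε) := by positivity
  have hto : Tendsto (fun n : ℕ => (A * (β + ε)) ^ κ * (Real.log n ^ κ * (n : ℝ) ^ (-ε)))
      atTop (nhds 0) := by
    have h0 : Tendsto (fun x : ℝ => Real.log x ^ κ / x ^ ε) atTop (nhds 0) :=
      (isLittleO_log_rpow_rpow_atTop κ hε).tendsto_div_nhds_zero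
    have h1 : Tendsto (fun n : ℕ => Real.log n ^ κ / (n : ℝ) ^ ε) atTop (nhds 0) :=
      h0.comp tendsto_natCast_atTop_atTop
    have h2 : Tendsto (fun n : ℕ => (A * (β + ε)) ^ κ * (Real.log n ^ κ / (n : ℝ) ^ ε))
        atTop (nhds ((A * (β + ε)) ^ κ * 0)) := h1.const_mul _
    rw [mul_zero] at h2
    apply h2.congr'
    filter_upwards [eventually_ge_atTop 1] with n hn1
    have hn0 : (0:ℝ) < (n : ℝ) := by exact_mod_cast hn1
    rw [Real.rpow_neg hn0.le, div_eq_mul_inv]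
  have hev2 : ∀ᶠ n : ℕ in atTop, ∀ b > (n : ℝ) ^ (β + ε), (n : ℝ) * theta F n b ^ κ < δ := by
    filter_upwards [hpart1, htendnb.eventually_ge_atTop X,
      htendnb.eventually_ge_atTop (Real.exp 1), htendnb.eventually_ge_atTop C,
      hto.eventually_lt_const hδpos, eventually_ge_atTop 1] with n hp1 hna hne hnc hnδ hn1
    intro b hbgt
    have hn0 : (0:ℝ) < (n : ℝ) := by exact_mod_cast hn1
    set t : ℝ := (n : ℝ) ^ (β + ε) with htdef
    have htpos : 0 < t := Real.rpow_pos_of_pos hn0 _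
    have hXb : X ≤ b := le_trans hna hbgt.le
    have heb : Real.exp 1 ≤ b := le_trans hne hbgt.le
    have hCb : C ≤ b := le_trans hnc hbgt.le
    have hb0 : 0 < b := lt_of_lt_of_le (lt_of_lt_of_le one_pos hX1) hXb
    have hb1 : 1 ≤ b := le_trans hX1 hXb
    have hlogb1 : 1 ≤ Real.log b := by
      rw [← Real.log_exp 1]
      exact Real.log_le_log (Real.exp_pos 1) heb
    have hrtb : 0 < rtail F b := hrt_pos b hb0
    have hprod_pos : 0 < (n : ℝ) * rtail F b := mul_pos hn0 hrtb
    have hprod_lt : (n : ℝ) * rtail F b < 1 := hp1 b hbgt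
    have hθpos : 0 < theta F n b := by
      have : Real.log ((n : ℝ) * rtail F b) < 0 := Real.log_neg hprod_pos hprod_lt
      have := div_pos (neg_pos.2 this) hb0
      exact this
    -- upper bound on -log(n * rtail b)
    have hlow : C⁻¹ * b ^ (-(δ0 + α)) ≤ rtail F b := by
      rw [htail b hb0]
      calc C⁻¹ * b ^ (-(δ0 + α)) = (C⁻¹ * b ^ (-δ0)) * b ^ (-α) := by
            rw [mul_assoc, ← Real.rpow_add hb0]
            congr 2
            ring
        _ ≤ L b * b ^ (-α) :=
            mul_le_mul_of_nonneg_right (hCX b hXb).1 (Real.rpow_nonneg hb0.le _)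
    have hloglow : -Real.log C - (δ0 + α) * Real.log b ≤ Real.log (rtail F b) := by
      have h := Real.log_le_log (by positivity) hlow
      rwa [Real.log_mul (by positivity) (by positivity), Real.log_inv,
        Real.log_rpow hb0, neg_mul, ← sub_eq_add_neg] at h
      done
    have hlogn : 0 ≤ Real.log (n : ℝ) := Real.log_nonneg (by exact_mod_cast hn1)
    have hlogC : Real.log C ≤ Real.log b := Real.log_le_log hCpos hCb
    have hneg : -Real.log ((n : ℝ) * rtail F b) ≤ A * Real.log b := by
      rw [Real.log_mul hn0.ne' hrtb.ne']
      have h6 : -Real.log (rtail F b) ≤ Real.log C + (δ0 + α) * Real.log b := by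
        linarith only [hloglow]
      have h7 : A * Real.log b = Real.log b + (δ0 + α) * Real.log b := by
        rw [hAdef]; ring
      linarith only [h6, h7, hlogn, hlogC]
    have hθle : theta F n b ≤ A * Real.log b / b := by
      unfold theta
      exact (div_le_div_iff_of_pos_right hb0).mpr hneg
    have hmono : Real.log b / b ≤ Real.log t / t :=
      Real.log_div_self_antitoneOn (by exact hne) (by exact heb) hbgt.le
    have hlogt : Real.log t = (β + ε) * Real.log n := Real.log_rpow hn0 _
    have hθle2 : theta F n b ≤ A * (β + ε) * Real.log n / t := by
      calc theta F n b ≤ A * Real.log b / b := hθle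
        _ = A * (Real.log b / b) := by ring
        _ ≤ A * (Real.log t / t) := mul_le_mul_of_nonneg_left hmono hApos.le
        _ = A * (β + ε) * Real.log n / t := by rw [hlogt]; ring
    have hθκ : theta F n b ^ κ ≤ (A * (β + ε) * Real.log n / t) ^ κ :=
      Real.rpow_le_rpow hθpos.le hθle2 hκpos.le
    have he1 : (A * (β + ε) * Real.log n / t) ^ κ
        = (A * (β + ε)) ^ κ * Real.log n ^ κ * ((n:ℝ) ^ ((β + ε) * κ))⁻¹ := by
      rw [Real.div_rpow (by positivity) htpos.le, Real.mul_rpow hABpos.le hlogn,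
        htdef, ← Real.rpow_mul hn0.le, div_eq_mul_inv]
    have he2 : (n:ℝ) * ((n:ℝ) ^ ((β + ε) * κ))⁻¹ = (n:ℝ) ^ (1 - (β + ε) * κ) := by
      rw [Real.rpow_sub hn0, Real.rpow_one, div_eq_mul_inv]
    have he3 : (n:ℝ) ^ (1 - (β + ε) * κ) ≤ (n:ℝ) ^ (-ε) := by
      apply Real.rpow_le_rpow_of_exponent_le (by exact_mod_cast hn1)
      have h8 : (β + ε) * κ = κ * (β + ε) := mul_comm _ _
      linarith only [hκβε, h8]
    have hcoef : 0 ≤ (A * (β + ε)) ^ κ * Real.log n ^ κ :=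
      mul_nonneg (Real.rpow_nonneg hABpos.le κ) (Real.rpow_nonneg hlogn κ)
    calc (n:ℝ) * theta F n b ^ κ
        ≤ (n:ℝ) * ((A * (β + ε)) ^ κ * Real.log n ^ κ * ((n:ℝ) ^ ((β + ε) * κ))⁻¹) := by
          rw [← he1]; exact mul_le_mul_of_nonneg_left hθκ hn0.le
      _ = (A * (β + ε)) ^ κ * Real.log n ^ κ * ((n:ℝ) * ((n:ℝ) ^ ((β + ε) * κ))⁻¹) := by
          ring
      _ = (A * (β + ε)) ^ κ * Real.log n ^ κ * (n:ℝ) ^ (1 - (β + ε) * κ) := by rw [he2]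
      _ ≤ (A * (β + ε)) ^ κ * Real.log n ^ κ * (n:ℝ) ^ (-ε) :=
          mul_le_mul_of_nonneg_left he3 hcoef
      _ = (A * (β + ε)) ^ κ * (Real.log n ^ κ * (n:ℝ) ^ (-ε)) := by ring
      _ < δ := hnδ

  exact eventually_atTop.1 hev2
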